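/- Let D be a nonnegative-integer-valued random variable with E[A^D] < ∞ for all A > 1, and let q_j(p) := P(D_p ≥ j) for the p-thinning D_p. If for some integer k ≥ 2 the identity ∑_{j=k}^∞ q_j(p) = (λ/2) p² holds for all p ∈ [0,1], where λ := E[D] > 0, then k = 2 and P(D ∈ {0,2}) = 1. -/

import Mathlib

open Real

noncomputable def binomProb (l r : ℕ) (p : ℝ) : ℝ :=
  (l.choose r : ℝ) * p ^ r * (1 - p) ^ (l - r)

/-- `q_j(p) = P(D_p ≥ j)` for the p-thinning of a random variable with pmf `w`. -/
noncomputable def thinTail (w : ℕ → ℝ) (j : ℕ) (p : ℝ) : ℝ :=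
  ∑' l : ℕ, w l * ∑ r ∈ Finset.Icc j l, binomProb l r p

lemma binomProb_nonneg {p : ℝ} (hp0 : 0 ≤ p) (hp1 : p ≤ 1) (l r : ℕ) :
    0 ≤ binomProb l r p :=
  mul_nonneg (mul_nonneg (by positivity) (pow_nonneg hp0 _)) (pow_nonneg (by linarith) _)

lemma binomProb_sum (l : ℕ) (p : ℝ) :
    ∑ r ∈ Finset.range (l + 1), binomProb l r p = 1 := by
  have h := add_pow p (1 - p) l
  have h1 : p + (1 - p) = 1 := by ring
  rw [h1, one_pow] at h
  calc ∑ r ∈ Finset.range (l + 1), binomProb l r p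
      = ∑ r ∈ Finset.range (l + 1), p ^ r * (1 - p) ^ (l - r) * (l.choose r : ℝ) := by
        refine Finset.sum_congr rfl fun r _ => ?_
        unfold binomProb; ring
    _ = 1 := h.symm

lemma binomProb_mean (l : ℕ) (p : ℝ) :
    ∑ r ∈ Finset.range (l + 1), (r : ℝ) * binomProb l r p = l * p := by
  cases l with
  | zero => simp [binomProb]
  | succ m =>
    rw [Finset.sum_range_succ']
    simp only [Nat.cast_zero, zero_mul, add_zero]
    have key : ∀ r : ℕ, ((r + 1 : ℕ) : ℝ) * binomProb (m + 1) (r + 1) p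
        = ((m + 1 : ℕ) : ℝ) * p * binomProb m r p := by
      intro r
      have hc : (((m + 1).choose (r + 1) : ℕ) : ℝ) * ((r : ℝ) + 1)
          = ((m : ℝ) + 1) * ((m.choose r : ℕ) : ℝ) := by
        have h := Nat.add_one_mul_choose_eq m r
        have h' := congrArg (Nat.cast (R := ℝ)) h
        push_cast at h' ⊢
        linarith [h']
      unfold binomProb
      have hsub : m + 1 - (r + 1) = m - r := by omega
      rw [hsub]
      push_cast
      linear_combination (p ^ r * p * (1 - p) ^ (m - r)) * hc
    calc ∑ r ∈ Finset.range (m + 1), ((r + 1 : ℕ) : ℝ) * binomProb (m + 1) (r + 1) p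
        = ∑ r ∈ Finset.range (m + 1), ((m + 1 : ℕ) : ℝ) * p * binomProb m r p := by
          refine Finset.sum_congr rfl fun r _ => ?_
          have := key r
          push_cast at this ⊢
          linarith [this]
      _ = ((m + 1 : ℕ) : ℝ) * p * ∑ r ∈ Finset.range (m + 1), binomProb m r p := by
          rw [← Finset.mul_sum]
      _ = (m + 1 : ℕ) * p := by rw [binomProb_sum]; ring

lemma tailSum (l : ℕ) (p : ℝ) :
    ∑' i : ℕ, ∑ r ∈ Finset.Icc (2 + i) l, binomProb l r p
      = (l : ℝ) * p - 1 + binomProb l 0 p := by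
  have hz : ∀ i ∉ Finset.range l, ∑ r ∈ Finset.Icc (2 + i) l, binomProb l r p = 0 := by
    intro i hi
    simp only [Finset.mem_range, not_lt] at hi
    rw [Finset.Icc_eq_empty (by omega), Finset.sum_empty]
  rw [tsum_eq_sum hz]
  have hcomm : ∑ i ∈ Finset.range l, ∑ r ∈ Finset.Icc (2 + i) l, binomProb l r p
      = ∑ r ∈ Finset.range (l + 1), ∑ i ∈ Finset.range (r - 1), binomProb l r p := by
    refine Finset.sum_comm' ?_
    intro i r
    simp only [Finset.mem_range, Finset.mem_Icc]
    omega
  rw [hcomm]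
  have hconst : ∀ r : ℕ, ∑ i ∈ Finset.range (r - 1), binomProb l r p
      = ((r - 1 : ℕ) : ℝ) * binomProb l r p := by
    intro r
    rw [Finset.sum_const, Finset.card_range, nsmul_eq_mul]
  rw [Finset.sum_congr rfl fun r _ => hconst r]
  have hterm : ∀ r : ℕ, ((r - 1 : ℕ) : ℝ) * binomProb l r p
      = (r : ℝ) * binomProb l r p - binomProb l r p
        + (if r = 0 then binomProb l r p else 0) := by
    intro r
    cases r with
    | zero => simp
    | succ n => simp [Nat.add_sub_cancel]; push_cast; ring
  rw [Finset.sum_congr rfl fun r _ => hterm r]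
  rw [Finset.sum_add_distrib, Finset.sum_sub_distrib, binomProb_sum, binomProb_mean]
  rw [Finset.sum_ite_eq' (Finset.range (l + 1)) 0 (fun r => binomProb l r p)]
  simp

lemma tail_le {p : ℝ} (hp0 : 0 ≤ p) (hp1 : p ≤ 1) (l j : ℕ) :
    ∑ r ∈ Finset.Icc j l, binomProb l r p ≤ 2 ^ l * p ^ j := by
  have step1 : ∀ r ∈ Finset.Icc j l, binomProb l r p ≤ (l.choose r : ℝ) * p ^ j := by
    intro r hr
    have hrj : j ≤ r := (Finset.mem_Icc.mp hr).1
    have h1 : p ^ r ≤ p ^ j := pow_le_pow_of_le_one hp0 hp1 hrj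
    have h2 : (1 - p) ^ (l - r) ≤ 1 := pow_le_one₀ (by linarith) (by linarith)
    have hC : (0:ℝ) ≤ (l.choose r : ℝ) := by positivity
    calc binomProb l r p ≤ (l.choose r : ℝ) * p ^ j * (1 - p) ^ (l - r) := by
          unfold binomProb
          exact mul_le_mul_of_nonneg_right (mul_le_mul_of_nonneg_left h1 hC)
            (pow_nonneg (by linarith) _)
      _ ≤ (l.choose r : ℝ) * p ^ j * 1 :=
          mul_le_mul_of_nonneg_left h2 (mul_nonneg hC (pow_nonneg hp0 _))
      _ = (l.choose r : ℝ) * p ^ j := mul_one _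
  calc ∑ r ∈ Finset.Icc j l, binomProb l r p
      ≤ ∑ r ∈ Finset.Icc j l, (l.choose r : ℝ) * p ^ j := Finset.sum_le_sum step1
    _ = (∑ r ∈ Finset.Icc j l, (l.choose r : ℝ)) * p ^ j := by rw [Finset.sum_mul]
    _ ≤ (∑ r ∈ Finset.range (l + 1), (l.choose r : ℝ)) * p ^ j := by
        refine mul_le_mul_of_nonneg_right ?_ (pow_nonneg hp0 _)
        refine Finset.sum_le_sum_of_subset_of_nonneg ?_ (fun r _ _ => by positivity)
        intro r hr
        simp only [Finset.mem_Icc] at hr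
        simp only [Finset.mem_range]
        omega
    _ = 2 ^ l * p ^ j := by
        norm_cast
        rw [Nat.sum_range_choose]

theorem thinTail_quadratic_identity (w : ℕ → ℝ)
    (hw0 : ∀ l, 0 ≤ w l) (hw1 : ∑' l, w l = 1)
    (hmom : ∀ A : ℝ, 1 < A → Summable fun l : ℕ => w l * A ^ l)
    (lam : ℝ) (hlam : lam = ∑' l : ℕ, w l * l) (hlam0 : 0 < lam)
    (k : ℕ) (hk : 2 ≤ k)
    (hid : ∀ p ∈ Set.Icc (0:ℝ) 1, (∑' i : ℕ, thinTail w (k + i) p) = lam / 2 * p ^ 2) :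
    k = 2 ∧ w 0 + w 2 = 1 := by
  have hsum2 : Summable (fun l : ℕ => w l * 2 ^ l) := hmom 2 one_lt_two
  have hsumw : Summable w := by
    refine Summable.of_nonneg_of_le hw0 (fun l => ?_) hsum2
    have h1 : (1:ℝ) ≤ 2 ^ l := one_le_pow₀ (by norm_num)
    nlinarith [hw0 l]
  have hsuml : Summable (fun l : ℕ => w l * l) := by
    refine Summable.of_nonneg_of_le
      (fun l => mul_nonneg (hw0 l) (Nat.cast_nonneg l)) (fun l => ?_) hsum2
    have : (l : ℝ) ≤ 2 ^ l := by exact_mod_cast (Nat.lt_two_pow_self (n := l)).le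
    exact mul_le_mul_of_nonneg_left this (hw0 l)
  set M : ℝ := ∑' l : ℕ, w l * 2 ^ l with hM
  have hM0 : 0 ≤ M := tsum_nonneg fun l => mul_nonneg (hw0 l) (by positivity)
  -- pointwise bound on thinTail
  have hTnn : ∀ (p : ℝ), 0 ≤ p → p ≤ 1 → ∀ l j,
      (0:ℝ) ≤ ∑ r ∈ Finset.Icc j l, binomProb l r p := fun p hp0 hp1 l j =>
    Finset.sum_nonneg fun r _ => binomProb_nonneg hp0 hp1 l r
  have hsummand : ∀ (p : ℝ), 0 ≤ p → p ≤ 1 → ∀ j,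
      Summable fun l : ℕ => w l * ∑ r ∈ Finset.Icc j l, binomProb l r p := by
    intro p hp0 hp1 j
    refine Summable.of_nonneg_of_le
      (fun l => mul_nonneg (hw0 l) (hTnn p hp0 hp1 l j)) (fun l => ?_)
      (hsum2.mul_right (p ^ j))
    calc w l * ∑ r ∈ Finset.Icc j l, binomProb l r p
        ≤ w l * (2 ^ l * p ^ j) := mul_le_mul_of_nonneg_left (tail_le hp0 hp1 l j) (hw0 l)
      _ = w l * 2 ^ l * p ^ j := by ring
  have hthin_le : ∀ (p : ℝ), 0 ≤ p → p ≤ 1 → ∀ j, thinTail w j p ≤ M * p ^ j := by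
    intro p hp0 hp1 j
    have hle : ∀ l : ℕ, w l * ∑ r ∈ Finset.Icc j l, binomProb l r p
        ≤ w l * 2 ^ l * p ^ j := by
      intro l
      calc w l * ∑ r ∈ Finset.Icc j l, binomProb l r p
          ≤ w l * (2 ^ l * p ^ j) := mul_le_mul_of_nonneg_left (tail_le hp0 hp1 l j) (hw0 l)
        _ = w l * 2 ^ l * p ^ j := by ring
    calc thinTail w j p ≤ ∑' l : ℕ, w l * 2 ^ l * p ^ j :=
          Summable.tsum_le_tsum hle (hsummand p hp0 hp1 j) (hsum2.mul_right (p ^ j))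
      _ = M * p ^ j := tsum_mul_right
  have hthin_nn : ∀ (p : ℝ), 0 ≤ p → p ≤ 1 → ∀ j, 0 ≤ thinTail w j p := by
    intro p hp0 hp1 j
    exact tsum_nonneg fun l => mul_nonneg (hw0 l) (hTnn p hp0 hp1 l j)
  -- Step 1 : k = 2
  have hk2 : k = 2 := by
    by_contra hne
    have hk3 : 3 ≤ k := by omega
    set p : ℝ := min (1/2) (lam / (8 * (M + 1))) with hp
    have hp0 : 0 < p := lt_min (by norm_num) (by positivity)
    have hp12 : p ≤ 1/2 := min_le_left _ _
    have hp1 : p ≤ 1 := by linarith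
    have hple : p ≤ lam / (8 * (M + 1)) := min_le_right _ _
    have hgeo : Summable (fun i : ℕ => M * p ^ (k + i)) := by
      have : (fun i : ℕ => M * p ^ (k + i)) = fun i : ℕ => (M * p ^ k) * p ^ i := by
        funext i; rw [pow_add]; ring
      rw [this]
      exact (summable_geometric_of_lt_one hp0.le (by linarith)).mul_left _
    have hle : (∑' i : ℕ, thinTail w (k + i) p) ≤ ∑' i : ℕ, M * p ^ (k + i) := by
      refine Summable.tsum_le_tsum (fun i => hthin_le p hp0.le hp1 (k + i)) ?_ hgeo
      exact Summable.of_nonneg_of_le (fun i => hthin_nn p hp0.le hp1 (k + i))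
        (fun i => hthin_le p hp0.le hp1 (k + i)) hgeo
    have hgeoval : (∑' i : ℕ, M * p ^ (k + i)) = M * p ^ k * (1 - p)⁻¹ := by
      have : (fun i : ℕ => M * p ^ (k + i)) = fun i : ℕ => (M * p ^ k) * p ^ i := by
        funext i; rw [pow_add]; ring
      rw [this, tsum_mul_left, tsum_geometric_of_lt_one hp0.le (by linarith)]
    have hid' := hid p ⟨hp0.le, hp1⟩
    rw [hid'] at hle
    rw [hgeoval] at hle
    -- lam/2 * p^2 ≤ M * p^k * (1-p)⁻¹ ≤ 2 M p^3
    have hpk : p ^ k ≤ p ^ 3 := pow_le_pow_of_le_one hp0.le hp1 hk3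
    have hinv : (1 - p)⁻¹ ≤ 2 := by
      rw [inv_le_iff_one_le_mul₀ (by linarith)]
      linarith
    have h2 : M * p ^ k * (1 - p)⁻¹ ≤ 2 * M * p ^ 3 := by
      have h3 : M * p ^ k ≤ M * p ^ 3 := mul_le_mul_of_nonneg_left hpk hM0
      have h4 : M * p ^ k * (1 - p)⁻¹ ≤ M * p ^ 3 * 2 := by
        refine mul_le_mul h3 hinv (inv_nonneg.mpr (by linarith)) (by positivity)
      linarith
    have h5 : lam / 2 * p ^ 2 ≤ 2 * M * p ^ 3 := le_trans hle h2
    have h6 : lam / 2 ≤ 2 * M * p := by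
      have hp2 : (0:ℝ) < p ^ 2 := by positivity
      have h5' : lam / 2 * p ^ 2 ≤ (2 * M * p) * p ^ 2 := by nlinarith [h5]
      exact le_of_mul_le_mul_right h5' hp2
    have h7 : 2 * M * p ≤ 2 * M * (lam / (8 * (M + 1))) :=
      mul_le_mul_of_nonneg_left hple (by positivity)
    have h8 : 2 * M * (lam / (8 * (M + 1))) < lam / 2 := by
      have hMp : (0:ℝ) < 8 * (M + 1) := by linarith
      rw [mul_div_assoc', div_lt_div_iff₀ hMp (by norm_num : (0:ℝ) < 2)]
      nlinarith [mul_nonneg hM0 hlam0.le]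
    linarith
  subst hk2
  -- Step 2 : generating function identity
  have hmain : ∀ p : ℝ, 0 ≤ p → p ≤ 1 →
      (∑' i : ℕ, thinTail w (2 + i) p)
        = lam * p - 1 + ∑' l : ℕ, w l * (1 - p) ^ l := by
    intro p hp0 hp1
    have hb := binomProb_nonneg hp0 hp1
    have hq0 : (0:ℝ) ≤ 1 - p := by linarith
    have hq1 : (1:ℝ) - p ≤ 1 := by linarith
    set g : ℕ → ℕ → ℝ :=
      fun l i => w l * ∑ r ∈ Finset.Icc (2 + i) l, binomProb l r p with hgdef
    have hgnn : ∀ l i, 0 ≤ g l i := fun l i =>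
      mul_nonneg (hw0 l) (hTnn p hp0 hp1 l (2 + i))
    have hrow : ∀ l : ℕ, Summable (g l) := by
      intro l
      refine summable_of_ne_finset_zero (s := Finset.range l) fun i hi => ?_
      simp only [Finset.mem_range, not_lt] at hi
      simp only [hgdef]
      rw [Finset.Icc_eq_empty (by omega), Finset.sum_empty, mul_zero]
    have hrowval : ∀ l : ℕ, (∑' i, g l i)
        = w l * ((l : ℝ) * p - 1 + binomProb l 0 p) := by
      intro l
      simp only [hgdef]
      rw [tsum_mul_left, tailSum l p]
    have hexprnn : ∀ l : ℕ, 0 ≤ (l : ℝ) * p - 1 + binomProb l 0 p := by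
      intro l
      have h := tsum_nonneg (L := SummationFilter.unconditional ℕ) (g := fun i => ∑ r ∈ Finset.Icc (2 + i) l, binomProb l r p)
        (fun i => hTnn p hp0 hp1 l (2 + i))
      rwa [tailSum l p] at h
    have hbinom0 : ∀ l : ℕ, binomProb l 0 p ≤ 1 := by
      intro l
      unfold binomProb
      simp only [Nat.choose_zero_right, Nat.cast_one, pow_zero, one_mul, Nat.sub_zero]
      exact pow_le_one₀ hq0 hq1
    have hcolsum : Summable fun l => ∑' i, g l i := by
      refine Summable.of_nonneg_of_le
        (fun l => tsum_nonneg fun i => hgnn l i) (fun l => ?_) hsum2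
      rw [hrowval l]
      have h1 : (l : ℝ) * p - 1 + binomProb l 0 p ≤ l := by
        have := hbinom0 l
        nlinarith [Nat.cast_nonneg (α := ℝ) l]
      have h2 : (l : ℝ) ≤ 2 ^ l := by exact_mod_cast (Nat.lt_two_pow_self (n := l)).le
      calc w l * ((l : ℝ) * p - 1 + binomProb l 0 p)
          ≤ w l * l := mul_le_mul_of_nonneg_left h1 (hw0 l)
        _ ≤ w l * 2 ^ l := mul_le_mul_of_nonneg_left h2 (hw0 l)
    have hcol : ∀ i : ℕ, Summable fun l => g l i := by
      intro i
      refine Summable.of_nonneg_of_le (fun l => hgnn l i) (fun l => ?_) hsum2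
      simp only [hgdef]
      calc w l * ∑ r ∈ Finset.Icc (2 + i) l, binomProb l r p
          ≤ w l * (2 ^ l * p ^ (2 + i)) :=
            mul_le_mul_of_nonneg_left (tail_le hp0 hp1 l (2 + i)) (hw0 l)
        _ ≤ w l * (2 ^ l * 1) := by
            refine mul_le_mul_of_nonneg_left ?_ (hw0 l)
            refine mul_le_mul_of_nonneg_left (pow_le_one₀ hp0 hp1) (by positivity)
        _ = w l * 2 ^ l := by ring
    have hunc : Summable (Function.uncurry g) := by
      refine (summable_prod_of_nonneg (fun x => hgnn x.1 x.2)).mpr ⟨fun l => hrow l, ?_⟩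
      exact hcolsum
    have hswap : (∑' i : ℕ, ∑' l : ℕ, g l i) = ∑' l : ℕ, ∑' i : ℕ, g l i :=
      Summable.tsum_comm' hunc hrow hcol
    have hthin : ∀ i : ℕ, thinTail w (2 + i) p = ∑' l : ℕ, g l i := fun i => rfl
    calc (∑' i : ℕ, thinTail w (2 + i) p)
        = ∑' i : ℕ, ∑' l : ℕ, g l i := tsum_congr hthin
      _ = ∑' l : ℕ, ∑' i : ℕ, g l i := hswap
      _ = ∑' l : ℕ, w l * ((l : ℝ) * p - 1 + binomProb l 0 p) := tsum_congr hrowval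
      _ = lam * p - 1 + ∑' l : ℕ, w l * (1 - p) ^ l := by
          have hb0 : ∀ l : ℕ, binomProb l 0 p = (1 - p) ^ l := by
            intro l
            unfold binomProb
            simp
          have hsplit : ∀ l : ℕ, w l * ((l : ℝ) * p - 1 + binomProb l 0 p)
              = ((w l * l) * p - w l) + w l * (1 - p) ^ l := by
            intro l; rw [hb0 l]; ring
          rw [tsum_congr hsplit]
          have hA : Summable fun l : ℕ => (w l * l) * p := hsuml.mul_right p
          have hC : Summable fun l : ℕ => w l * (1 - p) ^ l := by
            refine Summable.of_nonneg_of_le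
              (fun l => mul_nonneg (hw0 l) (pow_nonneg hq0 l)) (fun l => ?_) hsumw
            calc w l * (1 - p) ^ l ≤ w l * 1 :=
                  mul_le_mul_of_nonneg_left (pow_le_one₀ hq0 hq1) (hw0 l)
              _ = w l := mul_one _
          rw [Summable.tsum_add (hA.sub hsumw) hC, Summable.tsum_sub hA hsumw, tsum_mul_right, ← hlam, hw1]
  -- the generating function is the quadratic
  have hGen : ∀ s : ℝ, 0 ≤ s → s ≤ 1 →
      (∑' l : ℕ, w l * s ^ l) = 1 - lam / 2 + lam / 2 * s ^ 2 := by
    intro s hs0 hs1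
    have h := hid (1 - s) ⟨by linarith, by linarith⟩
    rw [hmain (1 - s) (by linarith) (by linarith)] at h
    simp only [sub_sub_cancel] at h
    linear_combination h
  -- Step 3 : extract coefficients
  have hpow : ∀ (c : ℕ) (s : ℝ), 0 ≤ s → s ≤ 1 →
      Summable fun l : ℕ => w (l + c) * s ^ l := by
    intro c s hs0 hs1
    refine Summable.of_nonneg_of_le
      (fun l => mul_nonneg (hw0 _) (pow_nonneg hs0 _)) (fun l => ?_)
      ((summable_nat_add_iff c).mpr hsumw)
    calc w (l + c) * s ^ l ≤ w (l + c) * 1 :=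
          mul_le_mul_of_nonneg_left (pow_le_one₀ hs0 hs1) (hw0 _)
      _ = w (l + c) := mul_one _
  have hstep : ∀ (c : ℕ) (s : ℝ), 0 ≤ s → s ≤ 1 →
      (∑' l : ℕ, w (l + c) * s ^ l)
        = w c + s * ∑' l : ℕ, w (l + (c + 1)) * s ^ l := by
    intro c s hs0 hs1
    have h := Summable.sum_add_tsum_nat_add (f := fun l : ℕ => w (l + c) * s ^ l) 1
      (hpow c s hs0 hs1)
    rw [← h]
    simp only [Finset.range_one, Finset.sum_singleton, Nat.zero_add, pow_zero, mul_one]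
    congr 1
    rw [← tsum_mul_left]
    refine tsum_congr fun l => ?_
    rw [show l + 1 + c = l + (c + 1) from by omega, pow_succ]
    ring
  have h00 : w 0 = 1 - lam / 2 := by
    have h := hGen 0 le_rfl zero_le_one
    rw [tsum_eq_single 0 (fun l hl => by simp [zero_pow hl])] at h
    simpa using h
  have hH1 : ∀ s : ℝ, 0 < s → s ≤ 1 →
      (∑' l : ℕ, w (l + 1) * s ^ l) = lam / 2 * s := by
    intro s hs0 hs1
    have h := hGen s hs0.le hs1
    have h2 := hstep 0 s hs0.le hs1
    simp only [Nat.add_zero, Nat.zero_add] at h2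
    rw [h2, h00] at h
    have h3 : s * (∑' l : ℕ, w (l + 1) * s ^ l) = s * (lam / 2 * s) := by
      linear_combination h
    exact mul_left_cancel₀ (ne_of_gt hs0) h3
  have hw1z : w 1 = 0 := by
    refine le_antisymm ?_ (hw0 1)
    by_contra hpos
    push_neg at hpos
    set s : ℝ := min 1 (w 1 / lam) with hs
    have hsp : 0 < s := lt_min one_pos (div_pos hpos hlam0)
    have hs1 : s ≤ 1 := min_le_left _ _
    have hle1 : w 1 ≤ lam / 2 * s := by
      have h := hH1 s hsp hs1
      have h2 : w (0 + 1) * s ^ 0 ≤ ∑' l : ℕ, w (l + 1) * s ^ l :=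
        Summable.le_tsum (hpow 1 s hsp.le hs1) 0
          (fun l _ => mul_nonneg (hw0 _) (pow_nonneg hsp.le _))
      simp only [Nat.zero_add, pow_zero, mul_one] at h2
      linarith [h2, h.le, h.ge]
    have hs2 : s ≤ w 1 / lam := min_le_right _ _
    have h4 : lam / 2 * s ≤ lam / 2 * (w 1 / lam) :=
      mul_le_mul_of_nonneg_left hs2 (by linarith)
    have heq : lam / 2 * (w 1 / lam) = w 1 / 2 := by
      field_simp
    linarith
  have hH2 : ∀ s : ℝ, 0 < s → s ≤ 1 →
      (∑' l : ℕ, w (l + 2) * s ^ l) = lam / 2 := by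
    intro s hs0 hs1
    have h := hH1 s hs0 hs1
    have h2 := hstep 1 s hs0.le hs1
    norm_num at h2
    rw [h2, hw1z, zero_add] at h
    have h3 : s * (∑' l : ℕ, w (l + 2) * s ^ l) = s * (lam / 2) := by
      linear_combination h
    exact mul_left_cancel₀ (ne_of_gt hs0) h3
  -- tail after 2 vanishes
  have hCz : (∑' l : ℕ, w (l + 3)) = 0 := by
    have e1 := hH2 1 one_pos le_rfl
    have e2 := hH2 (1/2) (by norm_num) (by norm_num)
    have s1 := hstep 2 1 zero_le_one le_rfl
    have s2 := hstep 2 (1/2) (by norm_num) (by norm_num)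
    norm_num at s1 s2
    simp only [one_pow, mul_one] at s1 e1
    rw [s1] at e1
    rw [s2] at e2
    -- e1 : w 2 + ∑' w (l+3) = lam/2 ; e2 : w 2 + 1/2 * H3(1/2) = lam/2
    have hmono : (∑' l : ℕ, w (l + 3) * (1/2 : ℝ) ^ l) ≤ ∑' l : ℕ, w (l + 3) := by
      refine Summable.tsum_le_tsum (fun l => ?_) (hpow 3 (1/2) (by norm_num) (by norm_num))
        ((summable_nat_add_iff 3).mpr hsumw)
      calc w (l + 3) * (1/2 : ℝ) ^ l ≤ w (l + 3) * 1 :=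
            mul_le_mul_of_nonneg_left (pow_le_one₀ (by norm_num) (by norm_num)) (hw0 _)
        _ = w (l + 3) := mul_one _
    have hnn : 0 ≤ ∑' l : ℕ, w (l + 3) := tsum_nonneg fun l => hw0 _
    have hnn2 : 0 ≤ ∑' l : ℕ, w (l + 3) * (1/2 : ℝ) ^ l :=
      tsum_nonneg fun l => mul_nonneg (hw0 _) (by positivity)
    -- from e1, e2 : ∑' w(l+3) = lam/2 - w 2 and (1/2) * H3(1/2) = lam/2 - w 2
    linarith
  refine ⟨rfl, ?_⟩
  have e0 := (Summable.sum_add_tsum_nat_add (f := w) 1 hsumw).symm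
  have e1 := (Summable.sum_add_tsum_nat_add (f := fun l : ℕ => w (l + 1)) 1
    ((summable_nat_add_iff 1).mpr hsumw)).symm
  have e2 := (Summable.sum_add_tsum_nat_add (f := fun l : ℕ => w (l + 1 + 1)) 1 ?_).symm
  · simp only [Finset.range_one, Finset.sum_singleton, Nat.zero_add] at e0 e1 e2
    have hre : (∑' l : ℕ, w (l + 1 + 1 + 1)) = ∑' l : ℕ, w (l + 3) :=
      tsum_congr fun l => by norm_num
    rw [hre, hCz] at e2
    -- e0 : ∑' w = w 0 + ∑' w (l+1) ; e1 : ∑' w(l+1) = w 1 + ∑' w (l+1+1)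
    -- e2 : ∑' w (l+1+1) = w 2 + 0
    rw [hw1] at e0
    norm_num at e1 e2
    linarith [e0, e1, e2, hw1z]
  · have : Summable fun l : ℕ => w (l + 2) := (summable_nat_add_iff 2).mpr hsumw
    refine this.congr fun l => ?_
    norm_num
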